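/- Let p be a prime and let β_1, …, β_r be completely multiplicative arithmetic functions with values in ℂ such that β_i(p) ≠ 0 for each i. Let α = β_1 ⋆ β_2 ⋆ ⋯ ⋆ β_r (Dirichlet convolution). Then: (a) the Dirichlet inverse satisfies α⁻¹(p^n) = 0 for all n > r (a positive function has finite domain at p); and (b) α(p^n) ≠ 0 for infinitely many n (a positive function has infinite range at p). -/

import Mathlib

open Finset PowerSeries

/-- An arithmetic function is completely multiplicative if it takes value 1 at 1
and is fully multiplicative on positive arguments. -/
def IsCompletelyMultiplicative (f : ArithmeticFunction ℂ) : Prop :=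
  f 1 = 1 ∧ ∀ m n : ℕ, 1 ≤ m → 1 ≤ n → f (m * n) = f m * f n

private lemma divAnti_prime_pow (p : ℕ) (hp : p.Prime) (n : ℕ) :
    Nat.divisorsAntidiagonal (p ^ n) =
      (Finset.range (n+1)).map ⟨fun k => (p ^ k, p ^ (n - k)),
        fun a b h => by
          have := congrArg Prod.fst h
          exact Nat.pow_right_injective hp.two_le this⟩ := by
  ext ⟨a, b⟩
  simp only [Nat.mem_divisorsAntidiagonal, Finset.mem_map, Finset.mem_range,
    Function.Embedding.coeFn_mk, Prod.mk.injEq]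
  constructor
  · rintro ⟨hab, h0⟩
    have ha : a ∣ p ^ n := Dvd.intro b hab
    obtain ⟨k, hk, rfl⟩ := (Nat.dvd_prime_pow hp).mp ha
    refine ⟨k, by omega, Prod.ext rfl ?_⟩
    have hpk : (p:ℕ) ^ k ≠ 0 := pow_ne_zero _ hp.pos.ne'
    have : p ^ k * b = p ^ k * p ^ (n - k) := by
      rw [hab, ← pow_add]; congr 1; omega
    exact (Nat.eq_of_mul_eq_mul_left (Nat.pos_of_ne_zero hpk) this.symm)
  · rintro ⟨k, hk, rfl, rfl⟩
    constructor
    · rw [← pow_add]; congr 1; omega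
    · exact pow_ne_zero _ hp.pos.ne'

/-- Bell series map: an arithmetic function to the power series of its values at
powers of `p`, as a ring hom. -/
private noncomputable def bell (p : ℕ) (hp : p.Prime) :
    ArithmeticFunction ℂ →+* PowerSeries ℂ where
  toFun f := PowerSeries.mk fun n => f (p ^ n)
  map_one' := by
    ext n
    simp only [coeff_mk, ArithmeticFunction.one_apply, coeff_one]
    have : p ^ n = 1 ↔ n = 0 := by
      constructor
      · intro h
        by_contra hn
        have := Nat.one_lt_pow hn hp.one_lt
        omega
      · rintro rfl; simp
    simp [this, hp.ne_one]
  map_mul' f g := by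
    ext n
    rw [PowerSeries.coeff_mul]
    simp only [coeff_mk, ArithmeticFunction.mul_apply]
    rw [divAnti_prime_pow p hp n, Finset.sum_map]
    rw [Finset.Nat.sum_antidiagonal_eq_sum_range_succ_mk]
    apply Finset.sum_congr rfl
    intro k hk
    simp only [Function.Embedding.coeFn_mk]
    rfl
  map_zero' := by ext n; simp
  map_add' f g := by ext n; simp

private lemma bell_compl_mult (p : ℕ) (hp : p.Prime) (f : ArithmeticFunction ℂ)
    (hf : IsCompletelyMultiplicative f) (n : ℕ) : f (p ^ n) = (f p) ^ n := by
  induction n with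
  | zero => simpa using hf.1
  | succ n ih =>
    rw [pow_succ, hf.2 _ _ (Nat.one_le_pow _ _ hp.pos) hp.pos, ih, pow_succ]

private lemma geom_inv (b : ℂ) :
    ((1 - Polynomial.C b * Polynomial.X : Polynomial ℂ) : PowerSeries ℂ) *
      (PowerSeries.mk fun n => b ^ n) = 1 := by
  have : ((1 - Polynomial.C b * Polynomial.X : Polynomial ℂ) : PowerSeries ℂ)
      = 1 - PowerSeries.C b * PowerSeries.X := by
    push_cast
    simp [Polynomial.coe_C, Polynomial.coe_X]
  rw [this, sub_mul, one_mul]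
  ext n
  cases n with
  | zero => simp
  | succ m =>
    rw [map_sub, mul_assoc]
    rw [show ((PowerSeries.C b * (X * PowerSeries.mk fun n => b ^ n))) = PowerSeries.C b * (X * PowerSeries.mk fun n => b ^ n) from rfl]
    rw [PowerSeries.coeff_C_mul, PowerSeries.coeff_succ_X_mul]
    simp [pow_succ, coeff_one, mul_comm]

theorem positive_function_type_two (p : ℕ) (hp : p.Prime)
    (r : ℕ) (hr : 1 ≤ r) (β : Fin r → ArithmeticFunction ℂ)
    (hβ : ∀ i, IsCompletelyMultiplicative (β i))
    (hβp : ∀ i, (β i) p ≠ 0)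
    (α αinv : ArithmeticFunction ℂ) (hα : α = ∏ i, β i)
    (hαinv : α * αinv = 1) :
    (∀ n : ℕ, r < n → αinv (p ^ n) = 0) ∧
    {n : ℕ | α (p ^ n) ≠ 0}.Infinite := by
  set B := bell p hp with hB
  set Q : Polynomial ℂ := ∏ i, (1 - Polynomial.C ((β i) p) * Polynomial.X) with hQ
  -- B α * Q = 1
  have hBα : B α = ∏ i, PowerSeries.mk fun n => ((β i) p) ^ n := by
    rw [hα, map_prod]
    apply Finset.prod_congr rfl
    intro i _
    ext n
    simp only [hB, bell, RingHom.coe_mk, MonoidHom.coe_mk, OneHom.coe_mk, coeff_mk]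
    exact bell_compl_mult p hp _ (hβ i) n
  have hQcoe : (Q : PowerSeries ℂ) = ∏ i, ((1 - Polynomial.C ((β i) p) * Polynomial.X : Polynomial ℂ) : PowerSeries ℂ) := by
    rw [hQ, ← Polynomial.coeToPowerSeries.ringHom_apply, map_prod]
    apply Finset.prod_congr rfl
    intro i _
    rw [Polynomial.coeToPowerSeries.ringHom_apply]
  have key : B α * (Q : PowerSeries ℂ) = 1 := by
    rw [hBα, hQcoe, ← Finset.prod_mul_distrib]
    rw [Finset.prod_eq_one]
    intro i _
    rw [mul_comm]; exact geom_inv _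
  -- part (a)
  have hBαinv : B αinv = (Q : PowerSeries ℂ) := by
    have h1 : B α * B αinv = 1 := by rw [← map_mul, hαinv, map_one]
    calc B αinv = B αinv * (B α * (Q : PowerSeries ℂ)) := by rw [key, mul_one]
    _ = (B α * B αinv) * (Q : PowerSeries ℂ) := by ring
    _ = (Q : PowerSeries ℂ) := by rw [h1, one_mul]
  have hdegQ : Q.natDegree ≤ r := by
    calc Q.natDegree ≤ ∑ i : Fin r, (1 - Polynomial.C ((β i) p) * Polynomial.X).natDegree :=
          Polynomial.natDegree_prod_le _ _
    _ ≤ ∑ _i : Fin r, 1 := by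
          apply Finset.sum_le_sum
          intro i _
          calc (1 - Polynomial.C ((β i) p) * Polynomial.X).natDegree
              ≤ max (1 : Polynomial ℂ).natDegree (Polynomial.C ((β i) p) * Polynomial.X).natDegree :=
                Polynomial.natDegree_sub_le _ _
          _ ≤ 1 := by
                simp only [Polynomial.natDegree_one, max_le_iff]
                exact ⟨Nat.zero_le _, Polynomial.natDegree_C_mul_le _ _ |>.trans (by simp)⟩
    _ = r := by simp
  constructor
  · intro n hn
    have : αinv (p ^ n) = PowerSeries.coeff n (B αinv) := by
      simp [hB, bell]
    rw [this, hBαinv, Polynomial.coeff_coe]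
    exact Polynomial.coeff_eq_zero_of_natDegree_lt (lt_of_le_of_lt hdegQ hn)
  · -- part (b)
    intro hfin
    have hfin' : {n : ℕ | α (p ^ n) ≠ 0}.Finite := hfin
    set S := hfin'.toFinset with hS
    set P : Polynomial ℂ := ∑ n ∈ S, Polynomial.C (α (p ^ n)) * Polynomial.X ^ n with hP
    have hPcoe : (P : PowerSeries ℂ) = B α := by
      ext n
      rw [Polynomial.coeff_coe]
      have hcoeff : P.coeff n = if n ∈ S then α (p ^ n) else 0 := by
        rw [hP, Polynomial.finset_sum_coeff]
        simp only [Polynomial.coeff_C_mul, Polynomial.coeff_X_pow]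
        rw [Finset.sum_congr rfl (fun m _ => by rw [mul_ite, mul_one, mul_zero])]
        rw [Finset.sum_ite_eq S n (fun m => α (p ^ m))]
      rw [hcoeff]
      simp only [hB, bell, RingHom.coe_mk, MonoidHom.coe_mk, OneHom.coe_mk, coeff_mk]
      by_cases h : n ∈ S
      · simp [h]
      · simp only [h, if_false]
        have : α (p ^ n) = 0 := by
          by_contra hne
          exact h (by rw [hS]; exact hfin'.mem_toFinset.mpr hne)
        exact this.symm
    have hPQ : P * Q = 1 := by
      apply Polynomial.coe_injective (R := ℂ)
      show ((P * Q : Polynomial ℂ) : PowerSeries ℂ) = ((1 : Polynomial ℂ) : PowerSeries ℂ)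
      rw [Polynomial.coe_mul, Polynomial.coe_one, hPcoe, key]
    have hQunit : IsUnit Q := IsUnit.of_mul_eq_one _ ((mul_comm P Q) ▸ hPQ)
    have hdegQ0 : Q.degree = 0 := Polynomial.degree_eq_zero_of_isUnit hQunit
    have hdegQr : Q.degree = r := by
      rw [hQ, Polynomial.degree_prod]
      have : ∀ i : Fin r, (1 - Polynomial.C ((β i) p) * Polynomial.X).degree = 1 := by
        intro i
        have : (1 - Polynomial.C ((β i) p) * Polynomial.X)
            = Polynomial.C (-(β i) p) * Polynomial.X + Polynomial.C 1 := by
          ring_nf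
          simp [sub_eq_add_neg, add_comm]
        rw [this]
        exact Polynomial.degree_linear (by simpa using hβp i)
      rw [Finset.sum_congr rfl (fun i _ => this i)]
      simp
    rw [hdegQ0] at hdegQr
    have : (r : WithBot ℕ) = 0 := hdegQr.symm
    have : r = 0 := by exact_mod_cast this
    omega
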